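/- Let r ≥ 1 be an integer and m_1, …, m_r positive integers with s = m_1 + ⋯ + m_r. For every subset F ⊆ {1, …, r} with 1 ∈ F, there exists an ordered partition (P_1, …, P_r) of {1, …, s} of type (m_1, …, m_r) whose reachable set R(P) equals F. (Equivalently, the map sending an ordered partition to its reachable set is a surjection onto the collection of subsets of {1, …, r} containing 1.) -/
import Mathlib


/-- `P` is an ordered partition of `{1, …, s}` of type `(m 1, …, m r)`:
the sets `P 1, …, P r` are pairwise disjoint, their union is `{1, …, s}`,
`|P i| = m i` for each `i ∈ {1, …, r}`, and `P i = ∅` for irrelevant indices. -/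
def IsOrderedPartition (r s : ℕ) (m : ℕ → ℕ) (P : ℕ → Finset ℕ) : Prop :=
  (∀ i, i ∉ Finset.Icc 1 r → P i = ∅) ∧
  (∀ i j, i ≠ j → Disjoint (P i) (P j)) ∧
  ((Finset.Icc 1 r).biUnion P = Finset.Icc 1 s) ∧
  (∀ i ∈ Finset.Icc 1 r, (P i).card = m i)

/-- `F` is closed under the arcs `i → j` given by `j ∈ P i ∩ {2, …, r}`. -/
def ArcClosed (r : ℕ) (P : ℕ → Finset ℕ) (F : Finset ℕ) : Prop :=
  ∀ i ∈ F, ∀ j ∈ P i, 2 ≤ j → j ≤ r → j ∈ F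

/-- `F` is the reachable set `R(P)`: the smallest set containing `1` that is
closed under the arcs `i → j` given by `j ∈ P i ∩ {2, …, r}`. -/
def IsReachSet (r : ℕ) (P : ℕ → Finset ℕ) (F : Finset ℕ) : Prop :=
  1 ∈ F ∧ ArcClosed r P F ∧
    ∀ F' : Finset ℕ, 1 ∈ F' → ArcClosed r P F' → F ⊆ F'


namespace ReachAux
open Finset

noncomputable def nxt (F : Finset ℕ) (i : ℕ) : Finset ℕ :=
  if h : (F.filter (fun j => i < j)).Nonempty then {(F.filter (fun j => i < j)).min' h} else ∅

noncomputable def req (r : ℕ) (F : Finset ℕ) (i : ℕ) : Finset ℕ :=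
  if i ∈ Finset.Icc 1 r then (if i ∈ F then nxt F i else {i}) else ∅

noncomputable def c (r : ℕ) (F : Finset ℕ) (m : ℕ → ℕ) (i : ℕ) : ℕ :=
  if i ∈ Finset.Icc 1 r then m i - (req r F i).card else 0

noncomputable def t (r : ℕ) (F : Finset ℕ) (m : ℕ → ℕ) (i : ℕ) : ℕ :=
  ∑ j ∈ Finset.Icc 1 i, c r F m j

def g (r k : ℕ) : ℕ := if k = 1 then 1 else r + k - 1

noncomputable def P (r : ℕ) (F : Finset ℕ) (m : ℕ → ℕ) (i : ℕ) : Finset ℕ :=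
  req r F i ∪ (Finset.Ioc (t r F m (i-1)) (t r F m i)).image (g r)

lemma g_injOn {r : ℕ} (hr : 1 ≤ r) {a b : ℕ} (ha : 1 ≤ a) (hb : 1 ≤ b)
    (h : g r a = g r b) : a = b := by
  unfold g at h; split at h <;> split at h <;> omega

lemma g_cases {r : ℕ} (k : ℕ) : g r k = 1 ∨ g r k = r + k - 1 := by
  unfold g; split <;> simp

lemma mem_nxt_iff {F : Finset ℕ} {i j : ℕ} :
    j ∈ nxt F i ↔ j ∈ F ∧ i < j ∧ ∀ k ∈ F, i < k → j ≤ k := by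
  unfold nxt
  split
  case isTrue h =>
    simp only [Finset.mem_singleton]
    constructor
    · rintro rfl
      have hmem := Finset.min'_mem (F.filter (fun j => i < j)) h
      simp only [Finset.mem_filter] at hmem
      refine ⟨hmem.1, hmem.2, fun k hk hik => ?_⟩
      exact Finset.min'_le _ _ (by simp [hk, hik])
    · rintro ⟨hjF, hij, hmin⟩
      apply le_antisymm
      · have hmem := Finset.min'_mem (F.filter (fun j => i < j)) h
        simp only [Finset.mem_filter] at hmem
        exact hmin _ hmem.1 hmem.2
      · exact Finset.min'_le _ _ (Finset.mem_filter.mpr ⟨hjF, hij⟩)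
  case isFalse h =>
    simp only [Finset.notMem_empty, false_iff]
    rintro ⟨hjF, hij, -⟩
    exact h ⟨j, by simp [hjF, hij]⟩

lemma mem_req_iff {r : ℕ} {F : Finset ℕ} {i j : ℕ} :
    j ∈ req r F i ↔ i ∈ Finset.Icc 1 r ∧
      ((i ∈ F ∧ j ∈ F ∧ i < j ∧ ∀ k ∈ F, i < k → j ≤ k) ∨ (i ∉ F ∧ j = i)) := by
  unfold req
  split
  case isTrue h => split <;> simp_all [mem_nxt_iff]
  case isFalse h => simp [h]

lemma req_subset {r : ℕ} {F : Finset ℕ} (hF : F ⊆ Finset.Icc 1 r) (hF1 : 1 ∈ F) (i : ℕ) :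
    req r F i ⊆ Finset.Icc 2 r := by
  intro j hj
  rw [mem_req_iff] at hj
  obtain ⟨hi, hj⟩ := hj
  simp only [Finset.mem_Icc] at hi ⊢
  rcases hj with ⟨-, hjF, hij, -⟩ | ⟨hiF, hji⟩
  · have := hF hjF; simp only [Finset.mem_Icc] at this; omega
  · have : i ≠ 1 := fun h => hiF (h ▸ hF1)
    omega

lemma card_req_le (r : ℕ) (F : Finset ℕ) (i : ℕ) : (req r F i).card ≤ 1 := by
  unfold req nxt
  split
  · split
    · split <;> simp
    · simp
  · simp

lemma t_mono (r : ℕ) (F : Finset ℕ) (m : ℕ → ℕ) {i j : ℕ} (h : i ≤ j) :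
    t r F m i ≤ t r F m j :=
  Finset.sum_le_sum_of_subset (Finset.Icc_subset_Icc_right h)

lemma t_succ (r : ℕ) (F : Finset ℕ) (m : ℕ → ℕ) {i : ℕ} (h : 1 ≤ i) :
    t r F m i = t r F m (i - 1) + c r F m i := by
  obtain ⟨n, rfl⟩ : ∃ n, i = n + 1 := ⟨i - 1, by omega⟩
  unfold t
  rw [Finset.sum_Icc_succ_top (by omega)]
  simp

lemma req_disj {r : ℕ} {F : Finset ℕ} {i j : ℕ} (hij : i ≠ j) :
    Disjoint (req r F i) (req r F j) := by
  rw [Finset.disjoint_left]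
  intro x hxi hxj
  rw [mem_req_iff] at hxi hxj
  obtain ⟨-, hxi⟩ := hxi
  obtain ⟨-, hxj⟩ := hxj
  rcases hxi with ⟨hiF, hxF, hix, hmini⟩ | ⟨hiF, rfl⟩
  · rcases hxj with ⟨hjF, -, hjx, hminj⟩ | ⟨hjF, rfl⟩
    · rcases Nat.lt_or_ge i j with h | h
      · have := hmini j hjF h; omega
      · have := hminj i hiF (by omega); omega
    · exact hjF hxF
  · rcases hxj with ⟨-, hxF, -, -⟩ | ⟨-, h⟩
    · exact hiF hxF
    · omega

lemma biUnion_req {r : ℕ} {F : Finset ℕ} (hF : F ⊆ Finset.Icc 1 r) (hF1 : 1 ∈ F) :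
    (Finset.Icc 1 r).biUnion (req r F) = Finset.Icc 2 r := by
  apply Finset.Subset.antisymm
  · intro x hx
    simp only [Finset.mem_biUnion] at hx
    obtain ⟨i, -, hxi⟩ := hx
    exact req_subset hF hF1 i hxi
  · intro x hx
    simp only [Finset.mem_Icc] at hx
    simp only [Finset.mem_biUnion]
    by_cases hxF : x ∈ F
    · have hne : (F.filter (fun k => k < x)).Nonempty :=
        ⟨1, by simp only [Finset.mem_filter]; exact ⟨hF1, by omega⟩⟩
      set p := (F.filter (fun k => k < x)).max' hne with hp
      have hpmem := Finset.max'_mem _ hne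
      simp only [Finset.mem_filter] at hpmem
      obtain ⟨hpF, hpx⟩ := hpmem
      refine ⟨p, hF hpF, ?_⟩
      rw [mem_req_iff]
      refine ⟨hF hpF, Or.inl ⟨hpF, hxF, hpx, fun k hk hpk => ?_⟩⟩
      by_contra hlt
      push_neg at hlt
      have : k ∈ F.filter (fun k => k < x) := by
        simp only [Finset.mem_filter]; exact ⟨hk, hlt⟩
      have := Finset.le_max' _ _ this
      omega
    · refine ⟨x, by simp only [Finset.mem_Icc]; omega, ?_⟩
      rw [mem_req_iff]
      exact ⟨by simp only [Finset.mem_Icc]; omega, Or.inr ⟨hxF, rfl⟩⟩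


lemma exists_pred {r : ℕ} {F : Finset ℕ} (hF : F ⊆ Finset.Icc 1 r) (hF1 : 1 ∈ F)
    {f : ℕ} (hf : f ∈ F) (hf1 : f ≠ 1) : ∃ p ∈ F, p < f ∧ f ∈ req r F p := by
  have hfIcc := hF hf
  simp only [Finset.mem_Icc] at hfIcc
  have hne : (F.filter (fun k => k < f)).Nonempty :=
    ⟨1, by simp only [Finset.mem_filter]; exact ⟨hF1, by omega⟩⟩
  set p := (F.filter (fun k => k < f)).max' hne with hp
  have hpmem := Finset.max'_mem _ hne
  simp only [Finset.mem_filter] at hpmem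
  obtain ⟨hpF, hpf⟩ := hpmem
  refine ⟨p, hpF, hpf, ?_⟩
  rw [mem_req_iff]
  refine ⟨hF hpF, Or.inl ⟨hpF, hf, hpf, fun k hk hpk => ?_⟩⟩
  by_contra hlt
  push_neg at hlt
  have : k ∈ F.filter (fun k => k < f) := by
    simp only [Finset.mem_filter]; exact ⟨hk, hlt⟩
  have := Finset.le_max' _ _ this
  omega

lemma fill_bound {r a b x : ℕ} (hx : x ∈ (Finset.Ioc a b).image (g r)) :
    x = 1 ∨ r + 1 ≤ x := by
  simp only [Finset.mem_image, Finset.mem_Ioc] at hx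
  obtain ⟨k, ⟨hk1, hk2⟩, rfl⟩ := hx
  unfold g
  split
  · left; rfl
  · right; omega

lemma sum_card_req {r : ℕ} {F : Finset ℕ} (hF : F ⊆ Finset.Icc 1 r) (hF1 : 1 ∈ F) :
    ∑ i ∈ Finset.Icc 1 r, (req r F i).card = r - 1 := by
  have : ∑ i ∈ Finset.Icc 1 r, (req r F i).card
      = ((Finset.Icc 1 r).biUnion (req r F)).card := by
    rw [Finset.card_biUnion]
    intro i _ j _ hij
    exact req_disj hij
  rw [this, biUnion_req hF hF1, Nat.card_Icc]
  omega

lemma t_top {r : ℕ} {F : Finset ℕ} {m : ℕ → ℕ} (hF : F ⊆ Finset.Icc 1 r) (hF1 : 1 ∈ F)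
    (hr : 1 ≤ r) (hm : ∀ i ∈ Finset.Icc 1 r, 0 < m i) {s : ℕ}
    (hs : s = ∑ i ∈ Finset.Icc 1 r, m i) :
    t r F m r + r = s + 1 := by
  have h1 : ∀ i ∈ Finset.Icc 1 r, c r F m i + (req r F i).card = m i := by
    intro i hi
    have := card_req_le r F i
    have := hm i hi
    unfold c
    rw [if_pos hi]
    omega
  have h2 : t r F m r + ∑ i ∈ Finset.Icc 1 r, (req r F i).card = s := by
    unfold t
    rw [← Finset.sum_add_distrib, hs]
    exact Finset.sum_congr rfl h1
  rw [sum_card_req hF hF1] at h2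
  omega

lemma biUnion_Ioc (r : ℕ) (F : Finset ℕ) (m : ℕ → ℕ) (n : ℕ) :
    (Finset.Icc 1 n).biUnion (fun i => Finset.Ioc (t r F m (i-1)) (t r F m i))
      = Finset.Ioc 0 (t r F m n) := by
  induction n with
  | zero => simp [t]
  | succ n ih =>
    rw [show Finset.Icc 1 (n+1) = insert (n+1) (Finset.Icc 1 n) by
          ext x; simp [Finset.mem_Icc]; omega,
        Finset.biUnion_insert, ih]
    simp only [Nat.add_sub_cancel]
    rw [Finset.union_comm, Finset.Ioc_union_Ioc_eq_Ioc (Nat.zero_le _)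
      (t_mono r F m (Nat.le_succ n))]

end ReachAux

/-- **Surjectivity of `φ_r`.** For `r ≥ 1` and positive integers `m 1, …, m r`
with `s = m 1 + ⋯ + m r`, every subset `F ⊆ {1, …, r}` with `1 ∈ F` is the
reachable set of some ordered partition of `{1, …, s}` of type
`(m 1, …, m r)`. -/
theorem reachSet_surjective
    (r : ℕ) (hr : 1 ≤ r) (m : ℕ → ℕ) (hm : ∀ i ∈ Finset.Icc 1 r, 0 < m i)
    (s : ℕ) (hs : s = ∑ i ∈ Finset.Icc 1 r, m i) :
    ∀ F : Finset ℕ, F ⊆ Finset.Icc 1 r → 1 ∈ F →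
      ∃ P : ℕ → Finset ℕ, IsOrderedPartition r s m P ∧ IsReachSet r P F := by
  intro F hF hF1
  classical
  open ReachAux in
  refine ⟨ReachAux.P r F m, ?_, ?_⟩
  · have hsr : r ≤ s := by
      calc r = ∑ _i ∈ Finset.Icc 1 r, 1 := by simp
      _ ≤ ∑ i ∈ Finset.Icc 1 r, m i := Finset.sum_le_sum (fun i hi => hm i hi)
      _ = s := hs.symm
    have htop := ReachAux.t_top hF hF1 hr hm hs
    refine ⟨?_, ?_, ?_, ?_⟩
    · -- empty outside
      intro i hi
      have hreq : ReachAux.req r F i = ∅ := by unfold ReachAux.req; rw [if_neg hi]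
      have htt : ReachAux.t r F m (i - 1) = ReachAux.t r F m i := by
        rcases Nat.eq_zero_or_pos i with h0 | h1
        · subst h0; rfl
        · rw [ReachAux.t_succ r F m h1]
          have : ReachAux.c r F m i = 0 := by unfold ReachAux.c; rw [if_neg hi]
          omega
      unfold ReachAux.P
      rw [hreq, htt]
      simp
    · -- disjoint
      intro i j hij
      rw [Finset.disjoint_left]
      rintro x hx hx'
      simp only [ReachAux.P, Finset.mem_union] at hx hx'
      rcases hx with hx | hx <;> rcases hx' with hx' | hx'
      · exact (Finset.disjoint_left.mp (ReachAux.req_disj hij)) hx hx'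
      · have h1 := ReachAux.req_subset hF hF1 i hx
        have h2 := ReachAux.fill_bound hx'
        simp only [Finset.mem_Icc] at h1; omega
      · have h1 := ReachAux.req_subset hF hF1 j hx'
        have h2 := ReachAux.fill_bound hx
        simp only [Finset.mem_Icc] at h1; omega
      · simp only [Finset.mem_image, Finset.mem_Ioc] at hx hx'
        obtain ⟨k, ⟨hk1, hk2⟩, hgk⟩ := hx
        obtain ⟨l, ⟨hl1, hl2⟩, hgl⟩ := hx'
        have hkl : k = l :=
          ReachAux.g_injOn hr (by omega) (by omega) (hgk.trans hgl.symm)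
        rcases Nat.lt_or_ge i j with h | h
        · have := ReachAux.t_mono r F m (show i ≤ j - 1 by omega); omega
        · have hji : j < i := by omega
          have := ReachAux.t_mono r F m (show j ≤ i - 1 by omega); omega
    · -- union
      apply Finset.Subset.antisymm
      · intro x hx
        simp only [Finset.mem_biUnion] at hx
        obtain ⟨i, hi, hx⟩ := hx
        simp only [ReachAux.P, Finset.mem_union] at hx
        simp only [Finset.mem_Icc] at hi ⊢
        rcases hx with hx | hx
        · have := ReachAux.req_subset hF hF1 i hx
          simp only [Finset.mem_Icc] at this; omega
        · have hb := ReachAux.fill_bound hx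
          simp only [Finset.mem_image, Finset.mem_Ioc] at hx
          obtain ⟨k, ⟨hk1, hk2⟩, hgk⟩ := hx
          have hle : k ≤ ReachAux.t r F m r :=
            le_trans hk2 (ReachAux.t_mono r F m hi.2)
          have : ReachAux.g r k = 1 ∨ ReachAux.g r k = r + k - 1 := ReachAux.g_cases k
          omega
      · intro x hx
        simp only [Finset.mem_Icc] at hx
        simp only [Finset.mem_biUnion]
        by_cases hxr : 2 ≤ x ∧ x ≤ r
        · have : x ∈ (Finset.Icc 1 r).biUnion (ReachAux.req r F) := by
            rw [ReachAux.biUnion_req hF hF1]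
            simp only [Finset.mem_Icc]; omega
          simp only [Finset.mem_biUnion] at this
          obtain ⟨i, hi, hxi⟩ := this
          exact ⟨i, hi, Finset.mem_union_left _ hxi⟩
        · -- x = 1 or r+1 ≤ x ≤ s
          set k := if x = 1 then 1 else x - r + 1 with hk
          have hgk : ReachAux.g r k = x := by
            unfold ReachAux.g
            rcases eq_or_ne x 1 with h1 | h1
            · simp [hk, h1]
            · rw [hk, if_neg h1, if_neg (by omega)]
              omega
          have hkmem : k ∈ Finset.Ioc 0 (ReachAux.t r F m r) := by
            simp only [Finset.mem_Ioc]
            rcases eq_or_ne x 1 with h1 | h1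
            · simp [hk, h1]; omega
            · rw [hk, if_neg h1]; omega
          rw [← ReachAux.biUnion_Ioc r F m r] at hkmem
          simp only [Finset.mem_biUnion] at hkmem
          obtain ⟨i, hi, hki⟩ := hkmem
          refine ⟨i, hi, Finset.mem_union_right _ ?_⟩
          exact Finset.mem_image.mpr ⟨k, hki, hgk⟩
    · -- cards
      intro i hi
      have hdisj : Disjoint (ReachAux.req r F i)
          ((Finset.Ioc (ReachAux.t r F m (i-1)) (ReachAux.t r F m i)).image (ReachAux.g r)) := by
        rw [Finset.disjoint_left]
        intro x hx hx'
        have h1 := ReachAux.req_subset hF hF1 i hx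
        have h2 := ReachAux.fill_bound hx'
        simp only [Finset.mem_Icc] at h1; omega
      rw [ReachAux.P, Finset.card_union_of_disjoint hdisj]
      have hinj : Set.InjOn (ReachAux.g r)
          (Finset.Ioc (ReachAux.t r F m (i-1)) (ReachAux.t r F m i)) := by
        intro a ha b hb hab
        simp only [Finset.coe_Ioc, Set.mem_Ioc] at ha hb
        exact ReachAux.g_injOn hr (by omega) (by omega) hab
      rw [Finset.card_image_of_injOn hinj, Nat.card_Ioc]
      have hi1 : 1 ≤ i := by simp only [Finset.mem_Icc] at hi; omega
      have hts := ReachAux.t_succ r F m hi1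
      have hc : ReachAux.c r F m i = m i - (ReachAux.req r F i).card := by
        unfold ReachAux.c; rw [if_pos hi]
      have := ReachAux.card_req_le r F i
      have := hm i hi
      omega
  · -- IsReachSet
    refine ⟨hF1, ?_, ?_⟩
    · intro i hiF j hj h2 hjr
      simp only [ReachAux.P, Finset.mem_union] at hj
      rcases hj with hj | hj
      · rw [ReachAux.mem_req_iff] at hj
        rcases hj.2 with ⟨-, hjF, -, -⟩ | ⟨hiF', -⟩
        · exact hjF
        · exact absurd hiF hiF'
      · have := ReachAux.fill_bound hj; omega
    · intro F' h1 hclosed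
      intro f hf
      induction f using Nat.strong_induction_on with
      | _ f ih =>
        by_cases hf1 : f = 1
        · subst hf1; exact h1
        · obtain ⟨p, hpF, hpf, hfreq⟩ := ReachAux.exists_pred hF hF1 hf hf1
          have hfIcc := hF hf
          simp only [Finset.mem_Icc] at hfIcc
          exact hclosed p (ih p hpf hpF) f
            (Finset.mem_union_left _ hfreq) (by omega) hfIcc.2
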